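/- Every non-signaling game is strongly completable. That is, if a game g ⊆ Σ^m × Σ^m admits a strategy ρ that solves g with probability 1 and whose S-marginals depend only on the inputs of the players in S (for every subset S of the players), then for every permutation σ of {1,…,m} the alternating statement ∀x_{σ(1)}∈Σ ∃y_{σ(1)}∈Σ ⋯ ∀x_{σ(m)}∈Σ ∃y_{σ(m)}∈Σ : (y_1,…,y_m) ∈ g(x_1,…,x_m) holds. -/

import Mathlib

/-- The alternating ∀∃-statement: given a list of (remaining) player indices and
partially-built input/output assignments, the adversary picks the next player's input and
we must pick that player's output, so that at the end the move is valid for the game `g`. -/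
def altGo {S : Type*} {m : ℕ} (g : (Fin m → S) → (Fin m → S) → Prop) :
    List (Fin m) → (Fin m → S) → (Fin m → S) → Prop
  | [], x, y => g x y
  | i :: rest, x, y =>
      ∀ xi : S, ∃ yi : S,
        altGo g rest (Function.update x i xi) (Function.update y i yi)

private lemma altGo_aux {S : Type*} {m : ℕ}
    (g : (Fin m → S) → (Fin m → S) → Prop)
    (ρ : (Fin m → S) → PMF (Fin m → S))
    (hsolve : ∀ x : Fin m → S, ∀ y ∈ (ρ x).support, g x y)
    (hns : ∀ (T : Set (Fin m)) (x x' : Fin m → S),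
        (∀ i ∈ T, x i = x' i) →
        (ρ x).map T.restrict = (ρ x').map T.restrict) :
    ∀ (L : List (Fin m)) (x0 y0 : Fin m → S),
      (∃ y ∈ (ρ x0).support, ∀ i, i ∉ L → y i = y0 i) →
      altGo g L x0 y0 := by
  intro L
  induction L with
  | nil =>
    intro x0 y0 ⟨y, hy, hagree⟩
    have : y = y0 := funext fun i => hagree i List.not_mem_nil
    exact this ▸ hsolve x0 y hy
  | cons i rest ih =>
    intro x0 y0 ⟨y, hy, hagree⟩ xi
    set x1 := Function.update x0 i xi with hx1
    set T : Set (Fin m) := {i}ᶜ with hT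
    have hx01 : ∀ j ∈ T, x0 j = x1 j := by
      intro j hj
      simp [hx1, Function.update_of_ne hj]
    have hmap := hns T x0 x1 hx01
    have hmem : T.restrict y ∈ ((ρ x1).map T.restrict).support := by
      rw [← hmap, PMF.support_map]
      exact ⟨y, hy, rfl⟩
    rw [PMF.support_map] at hmem
    obtain ⟨y', hy', hres⟩ := hmem
    refine ⟨y' i, ih x1 (Function.update y0 i (y' i)) ⟨y', hy', ?_⟩⟩
    intro j hj
    by_cases hji : j = i
    · subst hji; simp
    · have : y' j = y j := congrFun hres ⟨j, hji⟩
      rw [Function.update_of_ne hji, this]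
      exact hagree j (by simp [hji, hj])

/-- **Every non-signaling game is strongly completable.**
If a game `g ⊆ Σ^m × Σ^m` admits a strategy `ρ` that solves `g` with probability 1
(i.e., `ρ x` is supported on `g(x)` for every input `x`) and whose `S`-marginals depend
only on the inputs of the players in `S` (for every subset `S` of the players), then for
every permutation `σ` of the players the alternating statement
`∀ x_{σ(1)} ∃ y_{σ(1)} ⋯ ∀ x_{σ(m)} ∃ y_{σ(m)} : (y_1,…,y_m) ∈ g(x_1,…,x_m)` holds. -/
theorem nonsignaling_implies_strongly_completable
    {S : Type*} [Fintype S] [Nonempty S] {m : ℕ} (hm : 0 < m)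
    (g : (Fin m → S) → (Fin m → S) → Prop)
    (ρ : (Fin m → S) → PMF (Fin m → S))
    (hsolve : ∀ x : Fin m → S, ∀ y ∈ (ρ x).support, g x y)
    (hns : ∀ (T : Set (Fin m)) (x x' : Fin m → S),
        (∀ i ∈ T, x i = x' i) →
        (ρ x).map T.restrict = (ρ x').map T.restrict)
    (σ : Equiv.Perm (Fin m)) (x0 y0 : Fin m → S) :
    altGo g (List.ofFn ⇑σ) x0 y0 := by
  apply altGo_aux g ρ hsolve hns
  obtain ⟨y, hy⟩ := (ρ x0).support_nonempty
  exact ⟨y, hy, fun i hi => absurd (by simp [List.mem_ofFn]; exact σ.surjective i) hi⟩
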